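/- Let N ≥ 1 be an integer and ω₁,…,ω_N pairwise distinct reals. Let G be the N×N real matrix with entries G_{i,j} = (i−1)! · e^{ω_j} · L_{i−1}(−ω_j), 1 ≤ i,j ≤ N. Then G is invertible and for every i with 1 ≤ i ≤ N, (G^{−1})_{i,N} = e^{−ω_i} / ∏_{τ≠i} (ω_i−ω_τ). (This is the formula c_{N,i} = e^{−ω_i}/∏_{τ≠i}(ω_i−ω_τ) for the entries of the inverse moment matrix in the case L = 0.) -/

import Mathlib

open MeasureTheory Finset Matrix
open Polynomial

/-- The entire function `₀F₁(1;x) = ∑ xⁿ/(n!)²` (real argument). -/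
noncomputable def f01 (x : ℝ) : ℝ := ∑' n : ℕ, x ^ n / ((n.factorial : ℝ)) ^ 2

/-- The entire function `₀F₁(1;x) = ∑ xⁿ/(n!)²` (complex argument). -/
noncomputable def f01C (x : ℂ) : ℂ := ∑' n : ℕ, x ^ n / ((n.factorial : ℂ)) ^ 2

/-- Vandermonde product `Δ(x₁,…,x_m) = ∏_{i<j} (x_j − x_i)`. -/
noncomputable def vand {m : ℕ} (x : Fin m → ℝ) : ℝ :=
  ∏ p ∈ Finset.univ.filter (fun p : Fin m × Fin m => p.1 < p.2), (x p.2 - x p.1)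

/-- The nonnegative orthant `[0,∞)^m`. -/
def orth (m : ℕ) : Set (Fin m → ℝ) := Set.univ.pi fun _ => Set.Ici (0 : ℝ)

/-- The joint density `Δ(x)·det(₀F₁(1;ω_k x_j))·∏ x_i^L e^{−x_i}` of the squared
singular values. -/
noncomputable def dens (N L : ℕ) (ω : Fin N → ℝ) (x : Fin N → ℝ) : ℝ :=
  vand x * Matrix.det (Matrix.of fun k j : Fin N => f01 (ω k * x j)) *
    ∏ i, (x i ^ L * Real.exp (-x i))

/-- The matrix weight `w(X) = exp(−Tr(XX*)+Tr(ΩX)+Tr(X*Ω*))·det(X*X)^L`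
(complex-valued; its value is in fact real). -/
noncomputable def W (N L : ℕ) (Ω X : Matrix (Fin N) (Fin N) ℂ) : ℂ :=
  Complex.exp (-Matrix.trace (X * Xᴴ) + Matrix.trace (Ω * X) + Matrix.trace (Xᴴ * Ωᴴ)) *
    Matrix.det (Xᴴ * X) ^ L

/-- Matrix-model average `⟨h⟩ = (∫ h(X) w(X) dX)/(∫ w(X) dX)`, the integrals being
over Lebesgue measure on the 2N² real coordinates of X. -/
noncomputable def mavg (N L : ℕ) (Ω : Matrix (Fin N) (Fin N) ℂ)
    (h : Matrix (Fin N) (Fin N) ℂ → ℂ) : ℂ :=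
  (∫ X : Fin N → Fin N → ℂ, h (Matrix.of X) * W N L Ω (Matrix.of X)) /
    ∫ X : Fin N → Fin N → ℂ, W N L Ω (Matrix.of X)

/-- Eigenvalue-ensemble average `E_{ω,L}[g]` with respect to the density `dens`. -/
noncomputable def Eavg (N L : ℕ) (ω : Fin N → ℝ) (g : (Fin N → ℝ) → ℂ) : ℂ :=
  (∫ x in orth N, g x * (dens N L ω x : ℂ)) /
    ((∫ x in orth N, dens N L ω x : ℝ) : ℂ)

/-- The normalization `Ñ_L = ∫_{[0,∞)^L} ∏_{i,j}(t_i+ω_j)·Δ(t)²·∏ e^{−t_i} dt`. -/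
noncomputable def Ntilde (N L : ℕ) (ω : Fin N → ℝ) : ℝ :=
  ∫ t in orth L, (∏ i, ∏ j, (t i + ω j)) * vand t ^ 2 * ∏ i, Real.exp (-(t i))

/-- The degenerate normalization `Ñ_L(ρ) = ∫_{[0,∞)^L} ∏ (t_i+ρ)^N·Δ(t)²·∏ e^{−t_i} dt`. -/
noncomputable def NtildeDeg (N L : ℕ) (ρ : ℝ) : ℝ :=
  ∫ t in orth L, (∏ i, (t i + ρ) ^ N) * vand t ^ 2 * ∏ i, Real.exp (-(t i))

/-- The Laguerre polynomial `L_n(x) = ∑_{k=0}^n (n choose k)(−x)^k/k!`. -/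
noncomputable def laguerre (n : ℕ) (x : ℝ) : ℝ :=
  ∑ k ∈ Finset.range (n + 1), (n.choose k : ℝ) * (-x) ^ k / (k.factorial : ℝ)

/-- The monic Laguerre polynomial `π_n(x) = (−1)^n n! L_n(x)`. -/
noncomputable def piL (n : ℕ) (x : ℝ) : ℝ := (-1 : ℝ) ^ n * (n.factorial : ℝ) * laguerre n x

/-- The Bessel function `J_k(x) = ∑_m (−1)^m (x/2)^{2m+k}/(m!(m+k)!)`. -/
noncomputable def besselJ (k : ℕ) (x : ℝ) : ℝ :=
  ∑' m : ℕ, (-1 : ℝ) ^ m * (x / 2) ^ (2 * m + k) / ((m.factorial : ℝ) * ((m + k).factorial : ℝ))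

/-- The moment matrix `G_{i,j} = (i−1)!·e^{ω_j}·L_{i−1}(−ω_j)` (0-based indices). -/
noncomputable def Gmat (N : ℕ) (ω : Fin N → ℝ) : Matrix (Fin N) (Fin N) ℝ :=
  Matrix.of fun i j => ((i : ℕ).factorial : ℝ) * Real.exp (ω j) * laguerre (i : ℕ) (-ω j)


/-- monic polynomial whose eval at x is k! L_k(-x) -/
noncomputable def Qpoly (k : ℕ) : ℝ[X] :=
  ∑ m ∈ Finset.range (k + 1), C ((k.choose m : ℝ) * k.factorial / m.factorial) * X ^ m

lemma Qpoly_coeff (k n : ℕ) :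
    (Qpoly k).coeff n = if n ≤ k then (k.choose n : ℝ) * k.factorial / n.factorial else 0 := by
  rw [Qpoly, finset_sum_coeff]
  simp only [coeff_C_mul, coeff_X_pow, mul_ite, mul_one, mul_zero]
  rw [Finset.sum_ite_eq]
  simp [Nat.lt_succ_iff]

lemma Qpoly_eval (k : ℕ) (x : ℝ) :
    (Qpoly k).eval x = (k.factorial : ℝ) * laguerre k (-x) := by
  rw [Qpoly, laguerre, eval_finset_sum, Finset.mul_sum]
  refine Finset.sum_congr rfl fun m hm => ?_
  simp only [eval_mul, eval_C, eval_pow, eval_X, neg_neg]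
  ring

lemma Qpoly_degree_lt (k N : ℕ) (h : k < N) : (Qpoly k).degree < (N : ℕ) := by
  rw [degree_lt_iff_coeff_zero]
  intro m hm
  rw [Qpoly_coeff]
  have : ¬ m ≤ k := by exact_mod_cast fun hmk => absurd (le_trans hm (by exact_mod_cast hmk)) (by simp; omega)
  simp [this]

lemma basis_coeff {N : ℕ} (hN : 1 ≤ N) (ω : Fin N → ℝ) (hdist : Function.Injective ω)
    (j : Fin N) :
    (Lagrange.basis Finset.univ ω j).coeff (N - 1) =
      (∏ τ ∈ Finset.univ.erase j, (ω j - ω τ))⁻¹ := by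
  have hinj : Set.InjOn ω (Finset.univ : Finset (Fin N)) := hdist.injOn
  have hnd : (Lagrange.basis Finset.univ ω j).natDegree = N - 1 := by
    rw [Lagrange.natDegree_basis hinj (Finset.mem_univ j), Finset.card_univ, Fintype.card_fin]
  rw [← hnd, coeff_natDegree, Lagrange.basis, leadingCoeff_prod, ← Finset.prod_inv_distrib]
  refine Finset.prod_congr rfl fun τ hτ => ?_
  have hne : ω j ≠ ω τ := fun h => (Finset.mem_erase.mp hτ).1.symm (hdist h)
  rw [Lagrange.basisDivisor, leadingCoeff_mul, leadingCoeff_C, leadingCoeff_X_sub_C, mul_one]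

lemma key_sum {N : ℕ} (hN : 1 ≤ N) (ω : Fin N → ℝ) (hdist : Function.Injective ω)
    (k : ℕ) (hk : k < N) :
    ∑ j : Fin N, (Qpoly k).eval (ω j) * (∏ τ ∈ Finset.univ.erase j, (ω j - ω τ))⁻¹ =
      if k = N - 1 then 1 else 0 := by
  have hinj : Set.InjOn ω (Finset.univ : Finset (Fin N)) := hdist.injOn
  have hdeg : (Qpoly k).degree < #(Finset.univ : Finset (Fin N)) := by
    rw [Finset.card_univ, Fintype.card_fin]
    exact Qpoly_degree_lt k N hk
  have hid := Lagrange.eq_interpolate hinj hdeg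
  have h2 := congrArg (fun p => p.coeff (N - 1)) hid
  simp only [Lagrange.interpolate_apply, finset_sum_coeff, coeff_C_mul] at h2
  rw [Finset.sum_congr rfl (fun j _ => by rw [basis_coeff hN ω hdist j])] at h2
  rw [← h2, Qpoly_coeff]
  rcases eq_or_ne k (N - 1) with h | h
  · subst h
    simp [Nat.div_self, div_self, Nat.factorial_ne_zero]
  · have : ¬ N - 1 ≤ k := by omega
    simp [this, h]

noncomputable def Amat (N : ℕ) : Matrix (Fin N) (Fin N) ℝ :=
  Matrix.of fun i k => if (k : ℕ) ≤ (i : ℕ) then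
    ((i : ℕ).choose k : ℝ) * (i : ℕ).factorial / (k : ℕ).factorial else 0

noncomputable def Mmat (N : ℕ) (ω : Fin N → ℝ) : Matrix (Fin N) (Fin N) ℝ :=
  Matrix.of fun k j => Real.exp (ω j) * ω j ^ (k : ℕ)

lemma Gmat_decomp (N : ℕ) (ω : Fin N → ℝ) : Gmat N ω = Amat N * Mmat N ω := by
  ext i j
  simp only [Gmat, Amat, Mmat, Matrix.mul_apply, Matrix.of_apply, ite_mul, zero_mul]
  have heval : ((i : ℕ).factorial : ℝ) * laguerre (i : ℕ) (-ω j) = (Qpoly i).eval (ω j) := by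
    rw [Qpoly_eval]
  have : ∑ k : Fin N, (if (k : ℕ) ≤ (i : ℕ) then
      ((i : ℕ).choose k : ℝ) * (i : ℕ).factorial / (k : ℕ).factorial * (Real.exp (ω j) * ω j ^ (k : ℕ)) else 0)
      = Real.exp (ω j) * (Qpoly i).eval (ω j) := by
    rw [Fin.sum_univ_eq_sum_range (fun m => if m ≤ (i : ℕ) then
      ((i : ℕ).choose m : ℝ) * (i : ℕ).factorial / m.factorial * (Real.exp (ω j) * ω j ^ m) else 0)]
    rw [Qpoly, eval_finset_sum, Finset.mul_sum]
    rw [← Finset.sum_subset (Finset.range_subset_range.mpr (show (i:ℕ)+1 ≤ N from i.2))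
      (fun m _ hm => by simp [Finset.mem_range, Nat.lt_succ_iff] at hm; simp [hm])]
    refine Finset.sum_congr rfl fun m hm => ?_
    rw [Finset.mem_range, Nat.lt_succ_iff] at hm
    simp only [hm, if_true, eval_mul, eval_C, eval_pow, eval_X]
    ring
  rw [this, ← heval]; ring

lemma Amat_det (N : ℕ) : (Amat N).det = 1 := by
  rw [Matrix.det_of_lowerTriangular (Amat N)
    (fun i j h => by simp only [Amat, Matrix.of_apply]; rw [if_neg]; exact fun hc => absurd hc (by simpa using h))]
  refine Finset.prod_eq_one fun i _ => ?_
  simp [Amat, div_self, Nat.factorial_ne_zero]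

lemma Mmat_det_ne_zero (N : ℕ) (ω : Fin N → ℝ) (hdist : Function.Injective ω) :
    (Mmat N ω).det ≠ 0 := by
  have : Mmat N ω = (Matrix.vandermonde ω)ᵀ * Matrix.diagonal (fun j => Real.exp (ω j)) := by
    ext k j
    simp [Mmat, Matrix.mul_apply, Matrix.vandermonde, Matrix.diagonal,
      Finset.sum_ite_eq, mul_comm]
  rw [this, Matrix.det_mul, Matrix.det_transpose, Matrix.det_diagonal]
  exact mul_ne_zero ((Matrix.det_vandermonde_ne_zero_iff).mpr hdist)
    (Finset.prod_ne_zero_iff.mpr fun j _ => (Real.exp_pos _).ne')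

lemma Gmat_det_isUnit (N : ℕ) (ω : Fin N → ℝ) (hdist : Function.Injective ω) :
    IsUnit (Gmat N ω).det := by
  rw [Gmat_decomp, Matrix.det_mul, Amat_det, one_mul]
  exact (Mmat_det_ne_zero N ω hdist).isUnit

theorem statement16 (N : ℕ) (hN : 1 ≤ N) (ω : Fin N → ℝ) (hdist : Function.Injective ω) :
    IsUnit (Gmat N ω).det ∧
      ∀ i : Fin N,
        (Gmat N ω)⁻¹ i (⟨N - 1, by omega⟩ : Fin N) =
          Real.exp (-ω i) / ∏ τ ∈ Finset.univ.erase i, (ω i - ω τ) := by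
  have hGdet := Gmat_det_isUnit N ω hdist
  refine ⟨hGdet, fun i => ?_⟩
  set e : Fin N := ⟨N - 1, by omega⟩ with he
  set c : Fin N → ℝ := fun j => Real.exp (-ω j) * (∏ τ ∈ Finset.univ.erase j, (ω j - ω τ))⁻¹
    with hc
  have hmul : (Gmat N ω) *ᵥ c = Pi.single e 1 := by
    funext k
    simp only [Matrix.mulVec, dotProduct, Gmat, Matrix.of_apply, hc]
    have hterm : ∀ j : Fin N,
        (((k : ℕ).factorial : ℝ) * Real.exp (ω j) * laguerre (k : ℕ) (-ω j)) *
          (Real.exp (-ω j) * (∏ τ ∈ Finset.univ.erase j, (ω j - ω τ))⁻¹) =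
        (Qpoly (k : ℕ)).eval (ω j) * (∏ τ ∈ Finset.univ.erase j, (ω j - ω τ))⁻¹ := by
      intro j
      rw [Qpoly_eval]
      have hE : Real.exp (ω j) * Real.exp (-ω j) = 1 := by rw [← Real.exp_add]; simp
      linear_combination (((k : ℕ).factorial : ℝ) * laguerre (k : ℕ) (-ω j) *
        (∏ τ ∈ Finset.univ.erase j, (ω j - ω τ))⁻¹) * hE
    rw [Finset.sum_congr rfl (fun j _ => hterm j), key_sum hN ω hdist (k : ℕ) k.2]
    by_cases hk : k = e
    · subst hk
      simp [he]
    · rw [if_neg (fun h => hk (Fin.ext (by simp [he, h]))), Pi.single_eq_of_ne hk]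
  have hcol : (Gmat N ω)⁻¹ *ᵥ Pi.single e 1 = c := by
    rw [← hmul, Matrix.mulVec_mulVec, Matrix.nonsing_inv_mul _ hGdet, Matrix.one_mulVec]
  have hi := congrFun hcol i
  simp only [Matrix.mulVec_single, mul_one, hc, MulOpposite.op_one, one_smul, Matrix.col_apply] at hi
  rw [hi, div_eq_mul_inv]
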